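/- In the modified AKV model, the orthogonal projection onto the interaction-free subspace W_D := {e_1, ψ, ψ'}^⊥ ∩ ker Z ∩ ker Z* equals P_0 + (P_2 − |Z|); equivalently, the orthogonal projection onto W_D^⊥ equals P_1 + |Z| + P_3. -/

import Mathlib

noncomputable section

open ContinuousLinearMap Finset
open scoped InnerProductSpace

/-- The Hilbert space ℂ^(N+M+1) of the modified AKV model. -/
abbrev AKVSpace (N M : ℕ) := EuclideanSpace ℂ (Fin (N + M + 1))

namespace AKV

variable (N M : ℕ)

/-- standard basis vector -/
def ket (i : Fin (N + M + 1)) : AKVSpace N M := EuclideanSpace.single i 1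

/-- rank-one operator |u⟩⟨v| : x ↦ ⟪v, x⟫ • u -/
def ketbra (u v : AKVSpace N M) : AKVSpace N M →L[ℂ] AKVSpace N M :=
  (innerSL ℂ v).smulRight u

/-- indices 2,…,N of the second level -/
def idx2 : Finset (Fin (N + M + 1)) := univ.filter fun i => 2 ≤ (i : ℕ) ∧ (i : ℕ) ≤ N
/-- indices N+1,…,N+M of the third level -/
def idx3 : Finset (Fin (N + M + 1)) := univ.filter fun i => N + 1 ≤ (i : ℕ)

/-- orthogonal projection onto span{e_0} -/
def P0 : AKVSpace N M →L[ℂ] AKVSpace N M := ketbra N M (ket N M 0) (ket N M 0)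
/-- orthogonal projection onto span{e_1} -/
def P1 : AKVSpace N M →L[ℂ] AKVSpace N M := ketbra N M (ket N M 1) (ket N M 1)
/-- orthogonal projection onto span{e_2,…,e_N} -/
def P2 : AKVSpace N M →L[ℂ] AKVSpace N M := ∑ i ∈ idx2 N M, ketbra N M (ket N M i) (ket N M i)
/-- orthogonal projection onto span{e_{N+1},…,e_{N+M}} -/
def P3 : AKVSpace N M →L[ℂ] AKVSpace N M := ∑ i ∈ idx3 N M, ketbra N M (ket N M i) (ket N M i)

/-- ψ = e_2 + ⋯ + e_N -/
def psi : AKVSpace N M := ∑ i ∈ idx2 N M, ket N M i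
/-- ψ' = e_{N+1} + ⋯ + e_{N+M} -/
def psi' : AKVSpace N M := ∑ i ∈ idx3 N M, ket N M i

/-- |Z| = Z⋆Z -/
def absZ (Z : AKVSpace N M →L[ℂ] AKVSpace N M) : AKVSpace N M →L[ℂ] AKVSpace N M :=
  adjoint Z * Z

/-- hypotheses on the interference operator Z of the modified AKV model -/
def IsAKVZ (hM : 1 ≤ M) (Z : AKVSpace N M →L[ℂ] AKVSpace N M) : Prop :=
  Z = P3 N M * Z * P2 N M ∧
  Z * adjoint Z = P3 N M ∧
  Z (ket N M ⟨N - 1, by omega⟩) = ((Real.sqrt ((N : ℝ) - 1))⁻¹ : ℂ) • psi' N M ∧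
  adjoint Z (ket N M ⟨N + 1, by omega⟩) = ((Real.sqrt ((N : ℝ) - 1))⁻¹ : ℂ) • psi N M

/-- the five Kraus operators -/
def kraus (Γ1m Γ1p Γ2m Γ2p Γ3m : ℝ) (Z : AKVSpace N M →L[ℂ] AKVSpace N M) :
    Fin 5 → AKVSpace N M →L[ℂ] AKVSpace N M :=
  ![((Real.sqrt (2 * Γ1m) : ℝ) : ℂ) • ketbra N M (psi N M) (ket N M 1),
    ((Real.sqrt (2 * ((N : ℝ) - 1) * Γ2m) : ℝ) : ℂ) • Z,
    ((Real.sqrt (2 * Γ3m) : ℝ) : ℂ) • ketbra N M (ket N M 0) (psi' N M),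
    ((Real.sqrt (2 * Γ1p) : ℝ) : ℂ) • ketbra N M (ket N M 1) (psi N M),
    ((Real.sqrt (2 * ((N : ℝ) - 1) * Γ2p) : ℝ) : ℂ) • adjoint Z]

/-- the effective Hamiltonian -/
def Heff (γ1m γ1p γ2m γ2p γ3m : ℝ) (Z : AKVSpace N M →L[ℂ] AKVSpace N M) :
    AKVSpace N M →L[ℂ] AKVSpace N M :=
  (γ1p : ℂ) • ketbra N M (psi N M) (psi N M)
    - (((N : ℂ) - 1) * (γ1m : ℂ)) • ketbra N M (ket N M 1) (ket N M 1)
    + (((N : ℂ) - 1) * (γ2p : ℂ)) • P3 N M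
    - (((N : ℂ) - 1) * (γ2m : ℂ)) • absZ N M Z
    - (γ3m : ℂ) • ketbra N M (psi' N M) (psi' N M)

/-- the predual GKSL generator ℒ_* of the modified AKV model -/
def Lstar (Γ1m Γ1p Γ2m Γ2p Γ3m γ1m γ1p γ2m γ2p γ3m : ℝ)
    (Z ρ : AKVSpace N M →L[ℂ] AKVSpace N M) : AKVSpace N M →L[ℂ] AKVSpace N M :=
  -Complex.I • (Heff N M γ1m γ1p γ2m γ2p γ3m Z * ρ - ρ * Heff N M γ1m γ1p γ2m γ2p γ3m Z)
    + ∑ k : Fin 5,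
        (kraus N M Γ1m Γ1p Γ2m Γ2p Γ3m Z k * ρ * adjoint (kraus N M Γ1m Γ1p Γ2m Γ2p Γ3m Z k)
          - (1 / 2 : ℂ) • (adjoint (kraus N M Γ1m Γ1p Γ2m Γ2p Γ3m Z k) *
                kraus N M Γ1m Γ1p Γ2m Γ2p Γ3m Z k * ρ
              + ρ * (adjoint (kraus N M Γ1m Γ1p Γ2m Γ2p Γ3m Z k) *
                kraus N M Γ1m Γ1p Γ2m Γ2p Γ3m Z k)))

/-- a state: positive semidefinite with trace one -/
def IsState (ρ : AKVSpace N M →L[ℂ] AKVSpace N M) : Prop :=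
  ρ.IsPositive ∧ LinearMap.trace ℂ (AKVSpace N M) ↑ρ = 1

/-- the interaction-free subspace W_D -/
def WD (Z : AKVSpace N M →L[ℂ] AKVSpace N M) : Submodule ℂ (AKVSpace N M) :=
  (Submodule.span ℂ {ket N M 1, psi N M, psi' N M})ᗮ ⊓
    LinearMap.ker (Z : AKVSpace N M →ₗ[ℂ] AKVSpace N M) ⊓ LinearMap.ker (adjoint Z : AKVSpace N M →ₗ[ℂ] AKVSpace N M)

/-- the subspace V = {e_0, e_1, ψ, ψ', Zψ, Z⋆ψ'}^⊥ -/
def Vsub (Z : AKVSpace N M →L[ℂ] AKVSpace N M) : Submodule ℂ (AKVSpace N M) :=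
  (Submodule.span ℂ
    {ket N M 0, ket N M 1, psi N M, psi' N M, Z (psi N M), adjoint Z (psi' N M)})ᗮ

/-- Im|Z| ∩ {ψ, Z⋆ψ'}^⊥ -/
def subA (Z : AKVSpace N M →L[ℂ] AKVSpace N M) : Submodule ℂ (AKVSpace N M) :=
  LinearMap.range (absZ N M Z : AKVSpace N M →ₗ[ℂ] AKVSpace N M) ⊓ (Submodule.span ℂ {psi N M, adjoint Z (psi' N M)})ᗮ

/-- ran P₃ ∩ {ψ', Zψ}^⊥ -/
def subB (Z : AKVSpace N M →L[ℂ] AKVSpace N M) : Submodule ℂ (AKVSpace N M) :=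
  LinearMap.range (P3 N M : AKVSpace N M →ₗ[ℂ] AKVSpace N M) ⊓ (Submodule.span ℂ {psi' N M, Z (psi N M)})ᗮ

/-- the orthogonal projection onto a subspace, as an operator on the whole space -/
def projOp (U : Submodule ℂ (AKVSpace N M)) : AKVSpace N M →L[ℂ] AKVSpace N M :=
  U.subtypeL ∘L U.orthogonalProjectionOnto



section AuxLemmas

variable {N M : ℕ}

lemma ketbra_apply' (u v x : AKVSpace N M) :
    ketbra N M u v x = ⟪v, x⟫_ℂ • u := rfl

lemma inner_ket_apply (i : Fin (N + M + 1)) (x : AKVSpace N M) :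
    ⟪ket N M i, x⟫_ℂ = x i := by
  simp [ket, EuclideanSpace.inner_single_left]

lemma inner_ket_ket (i j : Fin (N + M + 1)) :
    ⟪ket N M i, ket N M j⟫_ℂ = if i = j then (1 : ℂ) else 0 := by
  rw [inner_ket_apply]
  simp [ket, EuclideanSpace.single_apply, eq_comm]

lemma sumProj_ket (s : Finset (Fin (N + M + 1))) (j : Fin (N + M + 1)) :
    (∑ i ∈ s, ketbra N M (ket N M i) (ket N M i)) (ket N M j)
      = if j ∈ s then ket N M j else 0 := by
  rw [ContinuousLinearMap.sum_apply]
  simp_rw [ketbra_apply', inner_ket_ket, ite_smul, one_smul, zero_smul]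
  rw [Finset.sum_ite_eq' s j (fun i => ket N M i)]

lemma sumProj_apply (s : Finset (Fin (N + M + 1))) (x : AKVSpace N M) :
    (∑ i ∈ s, ketbra N M (ket N M i) (ket N M i)) x = ∑ i ∈ s, x i • ket N M i := by
  rw [ContinuousLinearMap.sum_apply]
  simp_rw [ketbra_apply', inner_ket_apply]

lemma sumProj_sumket (s t : Finset (Fin (N + M + 1))) :
    (∑ i ∈ s, ketbra N M (ket N M i) (ket N M i)) (∑ j ∈ t, ket N M j)
      = ∑ j ∈ t ∩ s, ket N M j := by
  rw [map_sum]
  simp_rw [sumProj_ket]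
  rw [Finset.sum_ite_mem]

lemma sum_univ_smul (x : AKVSpace N M) :
    ∑ i, x i • ket N M i = x := by
  refine ext_inner_left ℂ fun v => ?_
  rw [inner_sum]
  simp_rw [inner_smul_right, ket, EuclideanSpace.inner_single_right]
  rw [PiLp.inner_apply]
  refine Finset.sum_congr rfl fun i _ => ?_
  rw [RCLike.inner_apply]
  ring

lemma sumProj_comp (s t : Finset (Fin (N + M + 1))) (y : AKVSpace N M) :
    (∑ i ∈ s, ketbra N M (ket N M i) (ket N M i))
        ((∑ j ∈ t, ketbra N M (ket N M j) (ket N M j)) y)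
      = ∑ j ∈ t ∩ s, y j • ket N M j := by
  rw [sumProj_apply t y, map_sum]
  simp_rw [map_smul, sumProj_ket, smul_ite, smul_zero]
  rw [Finset.sum_ite_mem]

lemma sumProj_symm (s : Finset (Fin (N + M + 1))) (u x : AKVSpace N M) :
    ⟪u, (∑ i ∈ s, ketbra N M (ket N M i) (ket N M i)) x⟫_ℂ
      = ⟪(∑ i ∈ s, ketbra N M (ket N M i) (ket N M i)) u, x⟫_ℂ := by
  rw [ContinuousLinearMap.sum_apply, ContinuousLinearMap.sum_apply, inner_sum, sum_inner]
  refine Finset.sum_congr rfl fun i _ => ?_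
  rw [ketbra_apply', ketbra_apply', inner_smul_left, inner_smul_right, inner_conj_symm]
  ring

lemma val_one_fin (hN : 3 ≤ N) : ((1 : Fin (N + M + 1)) : ℕ) = 1 := by
  rw [Fin.val_one']
  exact Nat.mod_eq_of_lt (by omega)

lemma mem_idx2_iff (i : Fin (N + M + 1)) :
    i ∈ idx2 N M ↔ 2 ≤ (i : ℕ) ∧ (i : ℕ) ≤ N := by
  simp [idx2]

lemma mem_idx3_iff (i : Fin (N + M + 1)) :
    i ∈ idx3 N M ↔ N + 1 ≤ (i : ℕ) := by
  simp [idx3]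

lemma split_univ (hN : 3 ≤ N) {W : Type*} [AddCommMonoid W] (f : Fin (N + M + 1) → W) :
    ∑ i, f i = f 0 + (f 1 + ((∑ i ∈ idx2 N M, f i) + ∑ i ∈ idx3 N M, f i)) := by
  have h1 : ((1 : Fin (N + M + 1)) : ℕ) = 1 := val_one_fin hN
  have hdisj : Disjoint (idx2 N M) (idx3 N M) := by
    rw [Finset.disjoint_left]
    intro a ha hb
    rw [mem_idx2_iff] at ha
    rw [mem_idx3_iff] at hb
    omega
  have h1mem : (1 : Fin (N + M + 1)) ∉ idx2 N M ∪ idx3 N M := by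
    simp only [Finset.mem_union, mem_idx2_iff, mem_idx3_iff, h1]
    omega
  have h0mem : (0 : Fin (N + M + 1)) ∉ insert 1 (idx2 N M ∪ idx3 N M) := by
    simp only [Finset.mem_insert, Finset.mem_union, mem_idx2_iff, mem_idx3_iff,
      Fin.val_zero, Fin.ext_iff, h1]
    omega
  have huniv : (Finset.univ : Finset (Fin (N + M + 1)))
      = insert 0 (insert 1 (idx2 N M ∪ idx3 N M)) := by
    ext i
    simp only [Finset.mem_univ, Finset.mem_insert, Finset.mem_union, mem_idx2_iff,
      mem_idx3_iff, Fin.ext_iff, Fin.val_zero, h1, true_iff]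
    omega
  rw [huniv, Finset.sum_insert h0mem, Finset.sum_insert h1mem, Finset.sum_union hdisj]

lemma P0_apply (x : AKVSpace N M) : P0 N M x = x 0 • ket N M 0 := by
  rw [P0, ketbra_apply', inner_ket_apply]

lemma P1_apply (x : AKVSpace N M) : P1 N M x = x 1 • ket N M 1 := by
  rw [P1, ketbra_apply', inner_ket_apply]

lemma complete_apply (hN : 3 ≤ N) (x : AKVSpace N M) :
    P0 N M x + (P1 N M x + (P2 N M x + P3 N M x)) = x := by
  rw [P0_apply, P1_apply, P2, P3, sumProj_apply, sumProj_apply]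
  rw [← split_univ hN (fun i => x i • ket N M i), sum_univ_smul]

end AuxLemmas

set_option maxHeartbeats 1000000 in
/-- In the modified AKV model, the orthogonal projection onto the interaction-free subspace
`W_D` equals `P₀ + (P₂ − |Z|)`, and the orthogonal projection onto `W_D^⊥` equals
`P₁ + |Z| + P₃`. -/
theorem projWD_eq
    (N M : ℕ) (hN : 3 ≤ N) (hM1 : 1 ≤ M) (hM2 : M ≤ N - 1)
    (Z : AKVSpace N M →L[ℂ] AKVSpace N M) (hZ : IsAKVZ N M hM1 Z) :
    projOp N M (WD N M Z) = P0 N M + (P2 N M - absZ N M Z) ∧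
    projOp N M ((WD N M Z)ᗮ) = P1 N M + absZ N M Z + P3 N M := by
  obtain ⟨hZ1, hZ2, hZ3, hZ4⟩ := hZ
  -- pointwise versions of the structural hypotheses
  have hZ1p : ∀ y, Z y = P3 N M (Z (P2 N M y)) := by
    intro y
    conv_lhs => rw [hZ1]
    rfl
  have hZ2p : ∀ y, Z (adjoint Z y) = P3 N M y := by
    intro y
    conv_rhs => rw [← hZ2]
    rfl
  -- basic projection pointwise identities
  have hidx23 : idx2 N M ∩ idx3 N M = ∅ := by
    ext i
    simp only [Finset.mem_inter, mem_idx2_iff, mem_idx3_iff, Finset.notMem_empty, iff_false]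
    omega
  have hP2idem : ∀ y, P2 N M (P2 N M y) = P2 N M y := by
    intro y
    rw [P2, sumProj_comp, Finset.inter_self, ← sumProj_apply]
  have hP3idem : ∀ y, P3 N M (P3 N M y) = P3 N M y := by
    intro y
    rw [P3, sumProj_comp, Finset.inter_self, ← sumProj_apply]
  have hP3P2 : ∀ y, P3 N M (P2 N M y) = 0 := by
    intro y
    rw [P2, P3, sumProj_comp, hidx23, Finset.sum_empty]
  have hZP2 : ∀ y, Z (P2 N M y) = Z y := by
    intro y
    rw [hZ1p (P2 N M y), hP2idem, ← hZ1p y]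
  have hP3Z : ∀ y, P3 N M (Z y) = Z y := by
    intro y
    conv_lhs => rw [hZ1p y]
    rw [hP3idem, ← hZ1p y]
  -- adjoint structure
  have adjsum : ∀ s : Finset (Fin (N + M + 1)),
      adjoint (∑ i ∈ s, ketbra N M (ket N M i) (ket N M i))
        = ∑ i ∈ s, ketbra N M (ket N M i) (ket N M i) := by
    intro s
    symm
    rw [ContinuousLinearMap.eq_adjoint_iff]
    intro x y
    rw [← sumProj_symm]
  have hP2adj : adjoint (P2 N M) = P2 N M := adjsum _
  have hP3adj : adjoint (P3 N M) = P3 N M := adjsum _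
  have hZadj : adjoint Z = P2 N M * (adjoint Z * P3 N M) := by
    conv_lhs => rw [hZ1]
    rw [ContinuousLinearMap.mul_def, ContinuousLinearMap.mul_def, adjoint_comp,
      adjoint_comp, hP2adj, hP3adj]
    rfl
  have hZadjp : ∀ y, adjoint Z y = P2 N M (adjoint Z (P3 N M y)) := by
    intro y
    conv_lhs => rw [hZadj]
    rfl
  -- key vector computations
  set c : ℂ := ((Real.sqrt ((N : ℝ) - 1))⁻¹ : ℂ) with hc
  have hcne : c ≠ 0 := by
    have h1 : (0 : ℝ) < Real.sqrt ((N : ℝ) - 1) := by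
      apply Real.sqrt_pos.2
      have : (3 : ℝ) ≤ (N : ℝ) := by exact_mod_cast hN
      linarith
    simp only [hc, ne_eq, Complex.ofReal_eq_zero, inv_eq_zero]
    exact ne_of_gt h1
  have hNmem : (⟨N + 1, by omega⟩ : Fin (N + M + 1)) ∈ idx3 N M := by
    rw [mem_idx3_iff]
  have hP3N1 : P3 N M (ket N M ⟨N + 1, by omega⟩) = ket N M ⟨N + 1, by omega⟩ := by
    rw [P3, sumProj_ket, if_pos hNmem]
  have hZpsi : Z (psi N M) = c⁻¹ • ket N M ⟨N + 1, by omega⟩ := by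
    have h1 : Z (adjoint Z (ket N M ⟨N + 1, by omega⟩)) = ket N M ⟨N + 1, by omega⟩ := by
      rw [hZ2p, hP3N1]
    rw [hZ4, map_smul] at h1
    rw [← h1, smul_smul, inv_mul_cancel₀ hcne, one_smul]
  have habs_psi : absZ N M Z (psi N M) = psi N M := by
    rw [absZ, ContinuousLinearMap.mul_apply, hZpsi, map_smul, hZ4, smul_smul,
      inv_mul_cancel₀ hcne, one_smul]
  have hP2psi : P2 N M (psi N M) = psi N M := by
    rw [P2, psi, sumProj_sumket, Finset.inter_self]
  have hP0psi : P0 N M (psi N M) = 0 := by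
    rw [P0_apply]
    have : psi N M 0 = 0 := by
      rw [psi]
      have h0 : ∀ i ∈ idx2 N M, (ket N M i : AKVSpace N M) 0 = 0 := by
        intro i hi
        rw [mem_idx2_iff] at hi
        rw [ket, EuclideanSpace.single_apply, if_neg]
        intro h
        rw [Fin.ext_iff] at h
        simp only [Fin.val_zero] at h
        omega
      calc (∑ i ∈ idx2 N M, ket N M i : AKVSpace N M) 0
          = ∑ i ∈ idx2 N M, (ket N M i : AKVSpace N M) 0 := by
            rw [WithLp.ofLp_sum]
            exact Finset.sum_apply 0 (idx2 N M) (fun i => ket N M i)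
        _ = 0 := Finset.sum_eq_zero h0
    rw [this, zero_smul]
  have hP0psi' : P0 N M (psi' N M) = 0 := by
    rw [P0_apply]
    have : psi' N M 0 = 0 := by
      rw [psi']
      have h0 : ∀ i ∈ idx3 N M, (ket N M i : AKVSpace N M) 0 = 0 := by
        intro i hi
        rw [mem_idx3_iff] at hi
        rw [ket, EuclideanSpace.single_apply, if_neg]
        intro h
        rw [Fin.ext_iff] at h
        simp only [Fin.val_zero] at h
        omega
      calc (∑ i ∈ idx3 N M, ket N M i : AKVSpace N M) 0
          = ∑ i ∈ idx3 N M, (ket N M i : AKVSpace N M) 0 := by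
            rw [WithLp.ofLp_sum]
            exact Finset.sum_apply 0 (idx3 N M) (fun i => ket N M i)
        _ = 0 := Finset.sum_eq_zero h0
    rw [this, zero_smul]
  have hidx32 : idx3 N M ∩ idx2 N M = ∅ := by
    ext i
    simp only [Finset.mem_inter, mem_idx2_iff, mem_idx3_iff, Finset.notMem_empty, iff_false]
    omega
  have hP2psi' : P2 N M (psi' N M) = 0 := by
    rw [P2, psi', sumProj_sumket, hidx32, Finset.sum_empty]
  have hZpsi' : Z (psi' N M) = 0 := by
    rw [hZ1p, hP2psi', map_zero, map_zero]
  have habs_psi' : absZ N M Z (psi' N M) = 0 := by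
    rw [absZ, ContinuousLinearMap.mul_apply, hZpsi', map_zero]
  have h1idx2 : (1 : Fin (N + M + 1)) ∉ idx2 N M := by
    rw [mem_idx2_iff, val_one_fin hN]
    omega
  have hP2e1 : P2 N M (ket N M 1) = 0 := by
    rw [P2, sumProj_ket, if_neg h1idx2]
  have hP0e1 : P0 N M (ket N M 1) = 0 := by
    rw [P0_apply, ket, EuclideanSpace.single_apply, if_neg, zero_smul]
    rw [Fin.ext_iff, val_one_fin hN, Fin.val_zero]
    omega
  have hZe1 : Z (ket N M 1) = 0 := by
    rw [hZ1p, hP2e1, map_zero, map_zero]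
  have habs_e1 : absZ N M Z (ket N M 1) = 0 := by
    rw [absZ, ContinuousLinearMap.mul_apply, hZe1, map_zero]
  -- the candidate projection
  set Q : AKVSpace N M →L[ℂ] AKVSpace N M := P0 N M + (P2 N M - absZ N M Z) with hQ
  have hQapp : ∀ x, Q x = P0 N M x + (P2 N M x - absZ N M Z x) := fun x => rfl
  -- Q kills e1, psi, psi'
  have hQe1 : Q (ket N M 1) = 0 := by
    rw [hQapp, hP0e1, hP2e1, habs_e1]
    simp
  have hQpsi : Q (psi N M) = 0 := by
    rw [hQapp, hP0psi, hP2psi, habs_psi]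
    simp
  have hQpsi' : Q (psi' N M) = 0 := by
    rw [hQapp, hP0psi', hP2psi', habs_psi']
    simp
  -- Z and Z† kill the range of Q
  have hZQ : ∀ x, Z (Q x) = 0 := by
    intro x
    rw [hQapp, map_add, map_sub]
    have h1 : Z (P0 N M x) = 0 := by
      rw [hZ1p (P0 N M x)]
      have : P2 N M (P0 N M x) = 0 := by
        rw [P0_apply, map_smul, P2, sumProj_ket, if_neg, smul_zero]
        rw [mem_idx2_iff, Fin.val_zero]
        omega
      rw [this, map_zero, map_zero]
    have h2 : Z (absZ N M Z x) = Z (P2 N M x) := by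
      rw [absZ, ContinuousLinearMap.mul_apply, hZ2p, hP3Z, hZP2]
    rw [h1, h2, zero_add, sub_self]
  have hZadjQ : ∀ x, adjoint Z (Q x) = 0 := by
    intro x
    rw [hQapp, map_add, map_sub]
    have h1 : adjoint Z (P0 N M x) = 0 := by
      rw [hZadjp]
      have : P3 N M (P0 N M x) = 0 := by
        rw [P0_apply, map_smul, P3, sumProj_ket, if_neg, smul_zero]
        rw [mem_idx3_iff, Fin.val_zero]
        omega
      rw [this, map_zero, map_zero]
    have h2' : ∀ y, adjoint Z (P2 N M y) = 0 := by
      intro y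
      rw [hZadjp, hP3P2, map_zero, map_zero]
    have h3 : adjoint Z (absZ N M Z x) = 0 := by
      rw [absZ, ContinuousLinearMap.mul_apply, hZadjp (Z x)]
      exact h2' _
    rw [h1, h2' x, h3, zero_add, sub_self]
  -- symmetry of Q w.r.t. the inner product
  have hQsym : ∀ u x : AKVSpace N M, ⟪u, Q x⟫_ℂ = ⟪Q u, x⟫_ℂ := by
    intro u x
    rw [hQapp, hQapp, inner_add_right, inner_sub_right, inner_add_left, inner_sub_left]
    have h0 : ⟪u, P0 N M x⟫_ℂ = ⟪P0 N M u, x⟫_ℂ := by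
      rw [P0, ketbra_apply', ketbra_apply', inner_smul_left, inner_smul_right, inner_conj_symm]
      ring
    have h2 : ⟪u, P2 N M x⟫_ℂ = ⟪P2 N M u, x⟫_ℂ := by rw [P2]; exact sumProj_symm _ u x
    have ha : ⟪u, absZ N M Z x⟫_ℂ = ⟪absZ N M Z u, x⟫_ℂ := by
      rw [absZ, ContinuousLinearMap.mul_apply, ContinuousLinearMap.mul_apply,
        adjoint_inner_right, adjoint_inner_left]
    rw [h0, h2, ha]
  -- membership facts about WD
  have hWDmem : ∀ w : AKVSpace N M, w ∈ WD N M Z ↔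
      (w ∈ (Submodule.span ℂ {ket N M 1, psi N M, psi' N M})ᗮ ∧ Z w = 0) ∧
        adjoint Z w = 0 := by
    intro w
    rw [WD, Submodule.mem_inf, Submodule.mem_inf]
    simp [LinearMap.mem_ker]
  -- Q fixes WD
  have hQfix : ∀ w ∈ WD N M Z, Q w = w := by
    intro w hw
    rw [hWDmem] at hw
    obtain ⟨⟨hwspan, hwZ⟩, hwZ'⟩ := hw
    have he1 : ⟪ket N M 1, w⟫_ℂ = 0 := by
      have := (Submodule.mem_orthogonal _ w).1 hwspan (ket N M 1)
        (Submodule.subset_span (by simp))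
      exact this
    have hP1w : P1 N M w = 0 := by
      rw [P1, ketbra_apply', he1, zero_smul]
    have hP3w : P3 N M w = 0 := by
      rw [← hZ2p, hwZ', map_zero]
    have habsw : absZ N M Z w = 0 := by
      rw [absZ, ContinuousLinearMap.mul_apply, hwZ, map_zero]
    have hcw := complete_apply hN w
    rw [hP1w, hP3w, zero_add, add_zero] at hcw
    rw [hQapp, habsw, sub_zero, hcw]
  -- Q x belongs to WD
  have hQmem : ∀ x, Q x ∈ WD N M Z := by
    intro x
    rw [hWDmem]
    refine ⟨⟨?_, hZQ x⟩, hZadjQ x⟩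
    rw [Submodule.mem_orthogonal]
    intro u hu
    induction hu using Submodule.span_induction with
    | mem u hu =>
        rcases hu with h | h | h
        · rw [h, hQsym, hQe1, inner_zero_left]
        · rw [h, hQsym, hQpsi, inner_zero_left]
        · rw [Set.mem_singleton_iff] at h
          rw [h, hQsym, hQpsi', inner_zero_left]
    | zero => rw [inner_zero_left]
    | add a b ha hb iha ihb => rw [inner_add_left, iha, ihb, add_zero]
    | smul r a ha iha => rw [inner_smul_left, iha, mul_zero]
  -- the first projection identity
  have hproj1 : projOp N M (WD N M Z) = Q := by
    refine ContinuousLinearMap.ext fun x => ?_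
    rw [projOp, ContinuousLinearMap.comp_apply, Submodule.subtypeL_apply]
    refine Submodule.eq_starProjection_of_mem_of_inner_eq_zero (hQmem x) fun w hw => ?_
    rw [inner_sub_left, ← hQsym x w, hQfix w hw, sub_self]
  refine ⟨hproj1, ?_⟩
  -- the second projection identity
  refine ContinuousLinearMap.ext fun x => ?_
  have h1 : ((WD N M Z).orthogonalProjectionOnto x : AKVSpace N M) = Q x := by
    have := congrFun (congrArg DFunLike.coe hproj1) x
    rw [projOp, ContinuousLinearMap.comp_apply, Submodule.subtypeL_apply] at this
    exact this
  have hperp : (Submodule.orthogonalProjectionOnto (WD N M Z)ᗮ x : AKVSpace N M) = x - Q x := by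
    rw [← h1, eq_sub_iff_add_eq, add_comm]
    exact Submodule.starProjection_add_starProjection_orthogonal (K := WD N M Z) x
  rw [projOp, ContinuousLinearMap.comp_apply, Submodule.subtypeL_apply, hperp]
  simp only [ContinuousLinearMap.add_apply, ContinuousLinearMap.sub_apply, hQapp]
  rw [sub_eq_iff_eq_add]
  have hcx := complete_apply hN x
  conv_lhs => rw [← hcx]
  abel

end AKV
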